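/- Let x_η denote the R_η-minimizing solution of Kx = y†. For all η₁, η₂ > 0 there holds ‖x_{η₁} − x_{η₂}‖_{ℓ²} ≤ min( ‖x_{η₁}‖_{ℓ²}/η₁ , ‖x_{η₂}‖_{ℓ²}/η₂ ) · |η₁ − η₂|; in particular η ↦ x_η is locally Lipschitz continuous on (0, ∞). -/

import Mathlib

noncomputable section

open Filter Topology

/-- `ℓ²(ℕ, ℝ)`. -/
abbrev ltwo : Type := lp (fun _ : ℕ => ℝ) 2

/-- `x ∈ ℓ¹`. -/
def inL1 (x : ltwo) : Prop := Memℓp (fun i => x i) 1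

/-- The `ℓ¹`-norm `‖x‖_{ℓ¹} = ∑ |xᵢ|` (junk value if `x ∉ ℓ¹`). -/
noncomputable def l1norm (x : ltwo) : ℝ := ∑' i, |x i|

/-- The functional `R_η(x) = η‖x‖₁ + ½‖x‖₂²` (finite on `ℓ¹ ∩ ℓ²`). -/
noncomputable def Rfun (η : ℝ) (x : ltwo) : ℝ := η * l1norm x + (1 / 2) * ‖x‖ ^ 2

/-- `x†` is the `R_η`-minimizing solution of `Kx = y†`: it solves the equation and
minimizes `R_η` among all solutions in `ℓ¹ ∩ ℓ²`. -/
def IsRMinSolution {H : Type*} [NormedAddCommGroup H] [InnerProductSpace ℝ H]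
    (K : ltwo →L[ℝ] H) (ydag : H) (η : ℝ) (xdag : ltwo) : Prop :=
  inL1 xdag ∧ K xdag = ydag ∧
    ∀ z : ltwo, inL1 z → K z = ydag → Rfun η xdag ≤ Rfun η z

lemma l1norm_nonneg (x : ltwo) : 0 ≤ l1norm x := tsum_nonneg fun _ => abs_nonneg _

lemma summable_abs_of_inL1 {x : ltwo} (h : inL1 x) : Summable fun i => |x i| := by
  have := (memℓp_gen_iff (p := 1) (by norm_num)).1 h
  simpa using this

lemma inL1_combo {x z : ltwo} (hx : inL1 x) (hz : inL1 z) (t : ℝ) :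
    inL1 (x + t • (z - x)) := by
  have h1 : (fun i => (x + t • (z - x)) i)
      = (fun i => x i) + t • ((fun i => z i) - fun i => x i) := by
    funext i
    rfl
  show Memℓp _ 1
  rw [h1]
  exact hx.add ((hz.sub hx).const_smul t)

lemma l1norm_combo_le {x z : ltwo} (hx : inL1 x) (hz : inL1 z) {t : ℝ}
    (ht0 : 0 ≤ t) (ht1 : t ≤ 1) :
    l1norm (x + t • (z - x)) ≤ (1 - t) * l1norm x + t * l1norm z := by
  have hxz : ∀ i, |(x + t • (z - x)) i| ≤ (1 - t) * |x i| + t * |z i| := by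
    intro i
    have h : (x + t • (z - x)) i = (1 - t) * x i + t * z i := by
      change x i + t * (z i - x i) = _
      ring
    rw [h]
    calc |(1 - t) * x i + t * z i| ≤ |(1 - t) * x i| + |t * z i| := abs_add_le _ _
      _ = (1 - t) * |x i| + t * |z i| := by
          rw [abs_mul, abs_mul, abs_of_nonneg (by linarith), abs_of_nonneg ht0]
  have hsx := summable_abs_of_inL1 hx
  have hsz := summable_abs_of_inL1 hz
  have hsum : Summable (fun i => (1 - t) * |x i| + t * |z i|) :=
    (hsx.mul_left _).add (hsz.mul_left _)
  have hsl : Summable (fun i => |(x + t • (z - x)) i|) :=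
    summable_abs_of_inL1 (inL1_combo hx hz t)
  calc l1norm (x + t • (z - x)) ≤ ∑' i, ((1 - t) * |x i| + t * |z i|) :=
        Summable.tsum_le_tsum hxz hsl hsum
    _ = (1 - t) * l1norm x + t * l1norm z := by
        rw [Summable.tsum_add (hsx.mul_left _) (hsz.mul_left _), tsum_mul_left, tsum_mul_left]
        rfl

/-- Variational inequality for the minimizer. -/
lemma varineq {H : Type*} [NormedAddCommGroup H] [InnerProductSpace ℝ H]
    {K : ltwo →L[ℝ] H} {ydag : H} {η : ℝ} (hη : 0 ≤ η) {x : ltwo}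
    (hx : IsRMinSolution K ydag η x) {z : ltwo} (hz1 : inL1 z) (hz2 : K z = ydag) :
    η * l1norm x ≤ η * l1norm z + (inner ℝ x (z - x) : ℝ) := by
  obtain ⟨hx1, hx2, hmin⟩ := hx
  by_contra hcon
  push_neg at hcon
  set w : ltwo := z - x with hw
  set δ : ℝ := η * l1norm x - (η * l1norm z + (inner ℝ x w : ℝ)) with hδ
  have hδpos : 0 < δ := by simp only [hδ]; linarith [hcon]
  set W : ℝ := ‖w‖ ^ 2 with hW
  have hWnn : 0 ≤ W := by positivity
  set t : ℝ := min 1 (δ / (W + 1)) with ht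
  have ht0 : 0 < t := lt_min one_pos (div_pos hδpos (by linarith))
  have ht1 : t ≤ 1 := min_le_left _ _
  have hfeas1 : inL1 (x + t • w) := inL1_combo hx1 hz1 t
  have hfeas2 : K (x + t • w) = ydag := by
    simp [hw, map_add, map_smul, map_sub, hx2, hz2]
  have hR := hmin _ hfeas1 hfeas2
  have hnorm : ‖x + t • w‖ ^ 2 = ‖x‖ ^ 2 + 2 * (t * (inner ℝ x w : ℝ)) + t ^ 2 * W := by
    rw [norm_add_sq_real, real_inner_smul_right, norm_smul]
    simp [hW, mul_pow, sq_abs]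
  have e1 : η * l1norm (x + t • w) ≤ η * ((1 - t) * l1norm x + t * l1norm z) :=
    mul_le_mul_of_nonneg_left (l1norm_combo_le hx1 hz1 ht0.le ht1) hη
  have e2 := hR
  simp only [Rfun] at e2
  rw [hnorm] at e2
  have key : t * δ ≤ t ^ 2 / 2 * W := by
    simp only [hδ]
    nlinarith [e1, e2]
  have htd : t * (W + 1) ≤ δ :=
    (le_div_iff₀ (by linarith : (0:ℝ) < W + 1)).1 (min_le_right _ _)
  nlinarith [key, htd, ht0, hδpos, hWnn]

/-- Strong convexity inequality at the minimizer. -/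
lemma strongineq {H : Type*} [NormedAddCommGroup H] [InnerProductSpace ℝ H]
    {K : ltwo →L[ℝ] H} {ydag : H} {η : ℝ} (hη : 0 ≤ η) {x : ltwo}
    (hx : IsRMinSolution K ydag η x) {z : ltwo} (hz1 : inL1 z) (hz2 : K z = ydag) :
    Rfun η x + (1 / 2) * ‖z - x‖ ^ 2 ≤ Rfun η z := by
  have hv := varineq hη hx hz1 hz2
  have hzx : x + (z - x) = z := by abel
  have hnorm : ‖z‖ ^ 2 = ‖x‖ ^ 2 + 2 * (inner ℝ x (z - x) : ℝ) + ‖z - x‖ ^ 2 := by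
    have := norm_add_sq_real x (z - x)
    rwa [hzx] at this
  simp only [Rfun]
  linarith [hv, hnorm]

/-- Key quantitative estimate. -/
lemma keybound {H : Type*} [NormedAddCommGroup H] [InnerProductSpace ℝ H]
    {K : ltwo →L[ℝ] H} {ydag : H} {η₁ η₂ : ℝ} (hη₁ : 0 < η₁) (hη₂ : 0 < η₂)
    {x₁ x₂ : ltwo} (h1 : IsRMinSolution K ydag η₁ x₁) (h2 : IsRMinSolution K ydag η₂ x₂) :
    ‖x₁ - x₂‖ ≤ ‖x₂‖ / η₂ * |η₁ - η₂| := by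
  have hI := strongineq hη₁.le h1 h2.1 h2.2.1
  have hII := strongineq hη₂.le h2 h1.1 h1.2.1
  rw [norm_sub_rev] at hI
  set D : ℝ := ‖x₁ - x₂‖ with hD
  have hD0 : 0 ≤ D := norm_nonneg _
  have hadd : x₂ + (x₁ - x₂) = x₁ := by abel
  have hnorm : ‖x₁‖ ^ 2 = ‖x₂‖ ^ 2 + 2 * (inner ℝ x₂ (x₁ - x₂) : ℝ) + D ^ 2 := by
    have := norm_add_sq_real x₂ (x₁ - x₂)
    rwa [hadd] at this
  simp only [Rfun] at hI hII
  have hkey : η₂ * D ^ 2 ≤ (η₁ - η₂) * (inner ℝ x₂ (x₁ - x₂) : ℝ) := by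
    nlinarith [mul_le_mul_of_nonneg_left hI hη₂.le, mul_le_mul_of_nonneg_left hII hη₁.le]
  have hcs : (η₁ - η₂) * (inner ℝ x₂ (x₁ - x₂) : ℝ) ≤ |η₁ - η₂| * (‖x₂‖ * D) := by
    calc (η₁ - η₂) * (inner ℝ x₂ (x₁ - x₂) : ℝ)
        ≤ |(η₁ - η₂) * (inner ℝ x₂ (x₁ - x₂) : ℝ)| := le_abs_self _
      _ = |η₁ - η₂| * |(inner ℝ x₂ (x₁ - x₂) : ℝ)| := abs_mul _ _
      _ ≤ |η₁ - η₂| * (‖x₂‖ * D) := by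
          exact mul_le_mul_of_nonneg_left (abs_real_inner_le_norm _ _) (abs_nonneg _)
  rcases eq_or_lt_of_le hD0 with h | h
  · rw [← h]
    positivity
  · have hmul : η₂ * D ≤ |η₁ - η₂| * ‖x₂‖ := by
      have := hkey.trans hcs
      nlinarith
    rw [div_mul_eq_mul_div, le_div_iff₀ hη₂]
    linarith [hmul]

/-- Local Lipschitz continuity of `η ↦ x_η` on `(0, ∞)`:
`‖x_{η₁} − x_{η₂}‖₂ ≤ min(‖x_{η₁}‖₂/η₁, ‖x_{η₂}‖₂/η₂)·|η₁ − η₂|`, and consequently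
`η ↦ x_η` is locally Lipschitz on `(0, ∞)`. -/
theorem RMinSolution_locally_lipschitz
    {H : Type*} [NormedAddCommGroup H] [InnerProductSpace ℝ H]
    (K : ltwo →L[ℝ] H) (ydag : H)
    (xsol : ℝ → ltwo) (hxsol : ∀ η : ℝ, 0 ≤ η → IsRMinSolution K ydag η (xsol η)) :
    (∀ η₁ η₂ : ℝ, 0 < η₁ → 0 < η₂ →
      ‖xsol η₁ - xsol η₂‖ ≤ min (‖xsol η₁‖ / η₁) (‖xsol η₂‖ / η₂) * |η₁ - η₂|) ∧
    (∀ η : ℝ, 0 < η → ∃ ε > (0 : ℝ), ∃ C : NNReal,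
      LipschitzOnWith C xsol (Set.Ioi (0 : ℝ) ∩ Metric.ball η ε)) := by
  constructor
  · intro η₁ η₂ h1 h2
    have b1 := keybound h1 h2 (hxsol η₁ h1.le) (hxsol η₂ h2.le)
    have b2 := keybound h2 h1 (hxsol η₂ h2.le) (hxsol η₁ h1.le)
    rw [norm_sub_rev, abs_sub_comm] at b2
    rw [min_mul_of_nonneg _ _ (abs_nonneg _)]
    exact le_min b2 b1
  · intro η hη
    set M : ℝ := 3 * η * l1norm (xsol η) + ‖xsol η‖ ^ 2 with hM
    have hMnn : 0 ≤ M := by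
      have := l1norm_nonneg (xsol η)
      positivity
    set B : ℝ := Real.sqrt M with hB
    have hBnn : 0 ≤ B := Real.sqrt_nonneg _
    refine ⟨η / 2, by positivity, Real.toNNReal (2 * B / η), ?_⟩
    have hbound : ∀ c, c ∈ Set.Ioi (0:ℝ) ∩ Metric.ball η (η/2) → ‖xsol c‖ ≤ B := by
      intro c hc
      have hc0 : 0 < c := hc.1
      have hcu : c ≤ 3 * η / 2 := by
        have := hc.2
        rw [Metric.mem_ball, Real.dist_eq] at this
        have := abs_lt.1 this
        linarith [this.1, this.2]
      have hmin := (hxsol c hc0.le).2.2 (xsol η) (hxsol η hη.le).1 (hxsol η hη.le).2.1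
      simp only [Rfun] at hmin
      have hsq : ‖xsol c‖ ^ 2 ≤ M := by
        have hLc := l1norm_nonneg (xsol c)
        have hLη := l1norm_nonneg (xsol η)
        nlinarith [mul_nonneg hc0.le hLc, mul_nonneg (by linarith : (0:ℝ) ≤ 3*η/2 - c) hLη]
      calc ‖xsol c‖ = Real.sqrt (‖xsol c‖ ^ 2) := by
            rw [Real.sqrt_sq (norm_nonneg _)]
        _ ≤ B := Real.sqrt_le_sqrt hsq
    apply LipschitzOnWith.of_dist_le_mul
    intro a ha b hb
    have ha0 : 0 < a := ha.1
    have hb0 : 0 < b := hb.1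
    have hbl : η / 2 ≤ b := by
      have := hb.2
      rw [Metric.mem_ball, Real.dist_eq] at this
      have := abs_lt.1 this
      linarith [this.1]
    have hkey := keybound ha0 hb0 (hxsol a ha0.le) (hxsol b hb0.le)
    have hfrac : ‖xsol b‖ / b ≤ 2 * B / η := by
      have h2B : (2:ℝ) * B / η = B / (η / 2) := by
        field_simp
      rw [h2B]
      exact div_le_div₀ hBnn (hbound b hb) (by positivity) hbl
    have hcoe : ((Real.toNNReal (2 * B / η) : NNReal) : ℝ) = 2 * B / η :=
      Real.coe_toNNReal _ (by positivity)
    rw [dist_eq_norm, Real.dist_eq, hcoe]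
    calc ‖xsol a - xsol b‖ ≤ ‖xsol b‖ / b * |a - b| := hkey
      _ ≤ 2 * B / η * |a - b| :=
        mul_le_mul_of_nonneg_right hfrac (abs_nonneg _)
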